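/- Suppose the kernel functions K_1,…,K_n are singular and J is an n-field function satisfying condition (∞₊). Let q > 0 and y ∈ S̄ with m_0(y) ≠ -∞, and let η > 0 and Z ⊆ I_0(y) satisfy, for every x ∈ S̄ with ‖x - y‖ ≤ η: Z ⊆ I_0(x) with |t - x_i| ≥ η for all t ∈ Z, i = 1,…,n; m_0(x) = sup_{t ∈ Z} F(x,t); and F(y,t) ≥ m_0(y) - q for all t ∈ Z. Then there exists η' ∈ (0, η) such that Z ⊆ [η', 1], so that for each x ∈ S̄ with ‖x - y‖ ≤ η' the set Z lies in the interior of I_0(x) and has distance at least η' from 0 as well as from x_1,…,x_n. The analogous assertion holds for m_n, I_n and the endpoint 1 when J satisfies (∞₋). -/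

import Mathlib

open Set Filter
open scoped BigOperators Topology

noncomputable section

/-- The real part of an extended-real-valued function. -/
def toR (K : ℝ → EReal) : ℝ → ℝ := fun t => (K t).toReal

/-- A *kernel function*: finite-valued, continuous and concave on `[-1,0)` and `(0,1]`,
never `+∞`, and with coinciding one-sided limits at `0` (given by the value `K 0`). -/
structure IsKernel (K : ℝ → EReal) : Prop where
  ne_top : ∀ t, K t ≠ ⊤
  finite_left : ∀ t ∈ Ico (-1:ℝ) 0, K t ≠ ⊥
  finite_right : ∀ t ∈ Ioc (0:ℝ) 1, K t ≠ ⊥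
  cont_left : ContinuousOn (toR K) (Ico (-1:ℝ) 0)
  cont_right : ContinuousOn (toR K) (Ioc (0:ℝ) 1)
  concave_left : ConcaveOn ℝ (Ico (-1:ℝ) 0) (toR K)
  concave_right : ConcaveOn ℝ (Ioc (0:ℝ) 1) (toR K)
  tendsto_left : Tendsto K (nhdsWithin 0 (Iio 0)) (nhds (K 0))
  tendsto_right : Tendsto K (nhdsWithin 0 (Ioi 0)) (nhds (K 0))

/-- Left one-sided derivative. -/
def Dm (f : ℝ → ℝ) (t : ℝ) : ℝ := derivWithin f (Iio t) t

/-- Right one-sided derivative. -/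
def Dp (f : ℝ → ℝ) (t : ℝ) : ℝ := derivWithin f (Ioi t) t

/-- Condition (PM_c): periodized `c`-monotonicity. -/
def PMcond (K : ℝ → EReal) (c : ℝ) : Prop :=
  ∀ t ∈ Ioo (0:ℝ) 1, c ≤ Dm (toR K) t - Dm (toR K) (t - 1)

/-- An *n-field function*: bounded above, never `+∞`, finite at more than `n` points of
`[0,1]`, where the endpoints count with weight `1/2`. -/
structure IsNField (n : ℕ) (J : ℝ → EReal) : Prop where
  ne_top : ∀ t, J t ≠ ⊤
  bdd : ∃ M : ℝ, ∀ t ∈ Icc (0:ℝ) 1, J t ≤ (M : EReal)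
  count : (∃ T : Finset ℝ, ↑T ⊆ {t | t ∈ Ioo (0:ℝ) 1 ∧ J t ≠ ⊥} ∧ n + 1 ≤ T.card) ∨
    ((∃ T : Finset ℝ, ↑T ⊆ {t | t ∈ Ioo (0:ℝ) 1 ∧ J t ≠ ⊥} ∧ n ≤ T.card) ∧
      (J 0 ≠ ⊥ ∨ J 1 ≠ ⊥))

/-- The open simplex `S`. -/
def openSimplex (n : ℕ) : Set (Fin n → ℝ) :=
  {y | StrictMono y ∧ ∀ i, y i ∈ Ioo (0:ℝ) 1}

/-- The closed simplex `S̄`. -/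
def closedSimplex (n : ℕ) : Set (Fin n → ℝ) :=
  {y | Monotone y ∧ ∀ i, y i ∈ Icc (0:ℝ) 1}

/-- The left endpoint `y_j` of `I_j(y)`, with the convention `y_0 = 0`. -/
def nodeLo {n : ℕ} (y : Fin n → ℝ) (j : ℕ) : ℝ :=
  if h : 0 < j ∧ j ≤ n then y ⟨j - 1, by omega⟩ else 0

/-- The right endpoint `y_{j+1}` of `I_j(y)`, with the convention `y_{n+1} = 1`. -/
def nodeHi {n : ℕ} (y : Fin n → ℝ) (j : ℕ) : ℝ :=
  if h : j < n then y ⟨j, h⟩ else 1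

/-- The interval `I_j(y) = [y_j, y_{j+1}]`. -/
def Ij {n : ℕ} (y : Fin n → ℝ) (j : ℕ) : Set ℝ := Icc (nodeLo y j) (nodeHi y j)

/-- The sum of translates function `F(y,t) = J(t) + ∑ K_j(t - y_j)`. -/
def SOT {n : ℕ} (K : Fin n → ℝ → EReal) (J : ℝ → EReal) (y : Fin n → ℝ) (t : ℝ) : EReal :=
  J t + ∑ i, K i (t - y i)

/-- The interval maximum `m_j(y) = sup_{t ∈ I_j(y)} F(y,t)`. -/
def mj {n : ℕ} (K : Fin n → ℝ → EReal) (J : ℝ → EReal) (y : Fin n → ℝ) (j : ℕ) : EReal :=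
  ⨆ t ∈ Ij y j, SOT K J y t

/-- The regularity set `Y`. -/
def regSet {n : ℕ} (K : Fin n → ℝ → EReal) (J : ℝ → EReal) : Set (Fin n → ℝ) :=
  {y ∈ openSimplex n | ∀ j ≤ n, mj K J y j ≠ ⊥}

/-- The difference function `Φ(y) = (m_1 - m_0, …, m_n - m_{n-1})`. -/
def PhiFun {n : ℕ} (K : Fin n → ℝ → EReal) (J : ℝ → EReal) (y : Fin n → ℝ) : Fin n → ℝ :=
  fun i => (mj K J y ((i : ℕ) + 1)).toReal - (mj K J y (i : ℕ)).toReal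

/-- A map between (pseudo)metric spaces is *locally bi-Lipschitz* if every point has a
neighborhood on which the map is a bi-Lipschitz homeomorphism onto its image. -/
def LocallyBiLipschitz {α β : Type*} [PseudoMetricSpace α] [PseudoMetricSpace β]
    (f : α → β) : Prop :=
  ∀ x : α, ∃ U ∈ 𝓝 x, ∃ c C : ℝ, 0 < c ∧ ∀ a ∈ U, ∀ b ∈ U,
    c * dist a b ≤ dist (f a) (f b) ∧ dist (f a) (f b) ≤ C * dist a b

/-- The relative interior of `[a,b] ⊆ [0,1]` in the space `[0,1]`. -/
def relIntIcc (a b : ℝ) : Set ℝ :=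
  (if a = 0 then Ici a else Ioi a) ∩ (if b = 1 then Iic b else Iio b)

/-- Condition `(∞₊)`. -/
def CondInfPlus (J : ℝ → EReal) : Prop :=
  J 0 = ⊥ ∧ Tendsto J (nhdsWithin 0 (Ioi 0)) (nhds ⊥)

/-- Condition `(∞₋)`. -/
def CondInfMinus (J : ℝ → EReal) : Prop :=
  J 1 = ⊥ ∧ Tendsto J (nhdsWithin 1 (Iio 1)) (nhds ⊥)

/-- Fenton's cusp condition `(∞'₊)`. -/
def CuspPlus (J : ℝ → EReal) : Prop :=
  ∀ M : ℝ, ∃ δ > (0:ℝ), ∀ s t : ℝ, 0 ≤ s → s < t → t ≤ δ →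
    J s ≠ ⊥ → J t ≠ ⊥ → M ≤ ((J t).toReal - (J s).toReal) / (t - s)

/-- Fenton's cusp condition `(∞'₋)`. -/
def CuspMinus (J : ℝ → EReal) : Prop :=
  ∀ M : ℝ, ∃ δ > (0:ℝ), ∀ t s : ℝ, 1 - δ ≤ t → t < s → s ≤ 1 →
    J s ≠ ⊥ → J t ≠ ⊥ → ((J t).toReal - (J s).toReal) / (t - s) ≤ -M

/-- `L : [0,1] → [0,∞)` is log-concave:
`L(λs + (1-λ)t) ≥ L(s)^λ L(t)^{1-λ}`. -/
def LogConcaveOn01 (L : ℝ → ℝ) : Prop :=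
  ∀ s ∈ Icc (0:ℝ) 1, ∀ t ∈ Icc (0:ℝ) 1, ∀ l ∈ Icc (0:ℝ) 1,
    L s ^ l * L t ^ (1 - l) ≤ L (l * s + (1 - l) * t)


lemma ereal_coe_sum {ι : Type*} (s : Finset ι) (f : ι → ℝ) :
    ((∑ i ∈ s, f i : ℝ) : EReal) = ∑ i ∈ s, (f i : EReal) := by
  induction s using Finset.cons_induction with
  | empty => simp
  | cons a s ha ih => rw [Finset.sum_cons, Finset.sum_cons, EReal.coe_add, ih]

/-- Bound for a kernel function away from the singularity. -/
lemma kernel_bdd (K : ℝ → EReal) (hK : IsKernel K) (η : ℝ) (hη : 0 < η) :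
    ∃ C : ℝ, ∀ s : ℝ, -1 ≤ s → s ≤ 1 → η ≤ |s| → K s ≤ (C : EReal) := by
  set η₀ := min η 1 with hη₀def
  have hη₀ : 0 < η₀ := lt_min hη one_pos
  have hsub1 : Icc (-1:ℝ) (-η₀) ⊆ Ico (-1:ℝ) 0 := fun s hs =>
    ⟨hs.1, lt_of_le_of_lt hs.2 (by linarith)⟩
  have hsub2 : Icc η₀ (1:ℝ) ⊆ Ioc (0:ℝ) 1 := fun s hs =>
    ⟨lt_of_lt_of_le hη₀ hs.1, hs.2⟩
  have h1 : BddAbove (toR K '' Icc (-1:ℝ) (-η₀)) :=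
    isCompact_Icc.bddAbove_image (hK.cont_left.mono hsub1)
  have h2 : BddAbove (toR K '' Icc (η₀:ℝ) 1) :=
    isCompact_Icc.bddAbove_image (hK.cont_right.mono hsub2)
  obtain ⟨C₁, hC₁⟩ := h1
  obtain ⟨C₂, hC₂⟩ := h2
  refine ⟨max C₁ C₂, fun s hs1 hs2 hs3 => ?_⟩
  by_cases hb : K s = ⊥
  · simp [hb]
  have hη₀s : η₀ ≤ |s| := le_trans (min_le_left _ _) hs3
  have hmem : s ∈ Icc (-1:ℝ) (-η₀) ∨ s ∈ Icc (η₀:ℝ) 1 := by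
    rcases le_total s 0 with h | h
    · left
      have : η₀ ≤ -s := by rwa [abs_of_nonpos h] at hη₀s
      exact ⟨hs1, by linarith⟩
    · right
      have : η₀ ≤ s := by rwa [abs_of_nonneg h] at hη₀s
      exact ⟨this, hs2⟩
  have hbnd : toR K s ≤ max C₁ C₂ := by
    rcases hmem with h | h
    · exact le_trans (hC₁ ⟨s, h, rfl⟩) (le_max_left _ _)
    · exact le_trans (hC₂ ⟨s, h, rfl⟩) (le_max_right _ _)
  have := EReal.coe_toReal (hK.ne_top s) hb
  calc K s = ((toR K s : ℝ) : EReal) := this.symm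
    _ ≤ ((max C₁ C₂ : ℝ) : EReal) := by exact_mod_cast hbnd

/-- From a lower bound on the sum of translates, extract a lower bound on `J`. -/
lemma sot_lower_J {n : ℕ} (K : Fin n → ℝ → EReal) (J : ℝ → EReal)
    (hJtop : ∀ t, J t ≠ ⊤)
    (y : Fin n → ℝ) (t : ℝ) (C : Fin n → ℝ)
    (hC : ∀ i, K i (t - y i) ≤ (C i : EReal))
    (a : ℝ) (ha : (a : EReal) ≤ SOT K J y t) :
    J t ≠ ⊥ ∧ ((a - ∑ i, C i : ℝ) : EReal) ≤ J t := by
  have hsum : (∑ i, K i (t - y i)) ≤ ((∑ i, C i : ℝ) : EReal) := by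
    rw [ereal_coe_sum]
    exact Finset.sum_le_sum fun i _ => hC i
  have hle : (a : EReal) ≤ J t + ((∑ i, C i : ℝ) : EReal) :=
    le_trans ha (add_le_add_right hsum (J t))
  have hJb : J t ≠ ⊥ := by
    intro hbot
    rw [hbot, EReal.bot_add] at hle
    exact (EReal.coe_ne_bot a) (le_bot_iff.mp hle)
  refine ⟨hJb, ?_⟩
  have hr := EReal.coe_toReal (hJtop t) hJb
  rw [← hr] at hle ⊢
  rw [← EReal.coe_add, EReal.coe_le_coe_iff] at hle
  rw [EReal.coe_le_coe_iff]
  linarith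

/-- Uniform lower bound on `J` over the set `Z`. -/
lemma Z_J_lower {n : ℕ} (K : Fin n → ℝ → EReal) (J : ℝ → EReal)
    (hK : ∀ i, IsKernel (K i)) (hJ : IsNField n J)
    (q : ℝ) (y : Fin n → ℝ) (hy : y ∈ closedSimplex n)
    (j : ℕ) (hm : mj K J y j ≠ ⊥)
    (η : ℝ) (hη : 0 < η) (Z : Set ℝ) (hZI : Z ⊆ Icc (0:ℝ) 1)
    (hsep : ∀ t ∈ Z, ∀ i, η ≤ |t - y i|)
    (hq : ∀ t ∈ Z, mj K J y j - (q : EReal) ≤ SOT K J y t)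
    (hZne : Z.Nonempty) :
    ∃ B : ℝ, ∀ t ∈ Z, (B : EReal) ≤ J t := by
  choose C hC using fun i => kernel_bdd (K i) (hK i) η hη
  have hCt : ∀ t ∈ Z, ∀ i, K i (t - y i) ≤ (C i : EReal) := by
    intro t ht i
    have h1 := (hZI ht).1
    have h2 := (hZI ht).2
    have h3 := (hy.2 i).1
    have h4 := (hy.2 i).2
    exact hC i (t - y i) (by linarith) (by linarith) (hsep t ht i)
  obtain ⟨t₀, ht₀⟩ := hZne
  -- mj is not ⊤
  have hmtop : mj K J y j ≠ ⊤ := by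
    intro htop
    have h := hq t₀ ht₀
    rw [htop] at h
    have : (⊤ : EReal) - (q : EReal) = ⊤ := by simp
    rw [this, top_le_iff] at h
    have hsum : (∑ i, K i (t₀ - y i)) ≤ ((∑ i, C i : ℝ) : EReal) := by
      rw [ereal_coe_sum]
      exact Finset.sum_le_sum fun i _ => hCt t₀ ht₀ i
    have hlt : SOT K J y t₀ < ⊤ := by
      rcases eq_or_ne (J t₀) ⊥ with hb | hb
      · rw [SOT, hb, EReal.bot_add]; exact bot_lt_top
      · calc SOT K J y t₀ ≤ J t₀ + ((∑ i, C i : ℝ) : EReal) :=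
              add_le_add_right hsum (J t₀)
          _ < ⊤ := EReal.add_lt_top (hJ.ne_top t₀) (EReal.coe_ne_top _)
    exact absurd h (ne_of_lt hlt)
  set m := (mj K J y j).toReal with hmdef
  have hmr : mj K J y j = (m : EReal) := (EReal.coe_toReal hmtop hm).symm
  refine ⟨m - q - ∑ i, C i, fun t ht => ?_⟩
  have h := hq t ht
  rw [hmr, ← EReal.coe_sub] at h
  exact (sot_lower_J K J hJ.ne_top y t C (hCt t ht) (m - q) h).2

/-- (Lemma 7.3 / `lem:ZqwithJcond2`.) For singular kernels: if `J`
satisfies `(∞₊)`, then any set `Z` as in the Z-q lemma for `j = 0` can be separated from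
`0`: there is `η' ∈ (0,η)` with `Z ⊆ [η', 1]`, so that for `x ∈ S̄` with `‖x - y‖ ≤ η'`
the set `Z` lies in the interior of `I_0(x)`, with distance at least `η'` from `0` and
from `x_1,…,x_n`. The analogous assertion holds for `m_n`, `I_n` and the endpoint `1`
when `J` satisfies `(∞₋)`. -/
theorem Zq_separation_from_endpoints
    {n : ℕ} (hn : 1 ≤ n) (K : Fin n → ℝ → EReal) (J : ℝ → EReal)
    (hK : ∀ i, IsKernel (K i)) (hsing : ∀ i, K i 0 = ⊥) (hJ : IsNField n J) :
    (CondInfPlus J →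
      ∀ q : ℝ, 0 < q → ∀ y ∈ closedSimplex n, mj K J y 0 ≠ ⊥ →
      ∀ η : ℝ, 0 < η → ∀ Z : Set ℝ, Z ⊆ Ij y 0 →
      (∀ x ∈ closedSimplex n, dist x y ≤ η →
        (Z ⊆ Ij x 0 ∧ ∀ t ∈ Z, ∀ i, η ≤ |t - x i|) ∧
        mj K J x 0 = (⨆ t ∈ Z, SOT K J x t)) →
      (∀ t ∈ Z, mj K J y 0 - (q : EReal) ≤ SOT K J y t) →
      ∃ η' : ℝ, 0 < η' ∧ η' < η ∧ (∀ t ∈ Z, η' ≤ t) ∧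
        ∀ x ∈ closedSimplex n, dist x y ≤ η' →
          Z ⊆ Ij x 0 ∧ ∀ t ∈ Z, η' ≤ |t - 0| ∧ ∀ i, η' ≤ |t - x i|) ∧
    (CondInfMinus J →
      ∀ q : ℝ, 0 < q → ∀ y ∈ closedSimplex n, mj K J y n ≠ ⊥ →
      ∀ η : ℝ, 0 < η → ∀ Z : Set ℝ, Z ⊆ Ij y n →
      (∀ x ∈ closedSimplex n, dist x y ≤ η →
        (Z ⊆ Ij x n ∧ ∀ t ∈ Z, ∀ i, η ≤ |t - x i|) ∧
        mj K J x n = (⨆ t ∈ Z, SOT K J x t)) →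
      (∀ t ∈ Z, mj K J y n - (q : EReal) ≤ SOT K J y t) →
      ∃ η' : ℝ, 0 < η' ∧ η' < η ∧ (∀ t ∈ Z, t ≤ 1 - η') ∧
        ∀ x ∈ closedSimplex n, dist x y ≤ η' →
          Z ⊆ Ij x n ∧ ∀ t ∈ Z, η' ≤ |t - 1| ∧ ∀ i, η' ≤ |t - x i|) := by
  constructor
  · -- the `(∞₊)` case
    intro hJp q hq0 y hy hm0 η hη Z hZ0 hfam hqZ
    rcases Set.eq_empty_or_nonempty Z with hZe | hZne
    · subst hZe
      exact ⟨η/2, by linarith, by linarith, by simp, fun x hx hdx => by simp⟩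
    · have hlo : nodeLo y 0 = 0 := by unfold nodeLo; simp
      have hhi : nodeHi y 0 ≤ 1 := by
        unfold nodeHi
        split
        · exact (hy.2 _).2
        · exact le_rfl
      have hZI : Z ⊆ Icc (0:ℝ) 1 := fun t ht =>
        ⟨hlo ▸ ((hZ0 ht).1), le_trans (hZ0 ht).2 hhi⟩
      have hself := hfam y hy (by simp [hη.le])
      obtain ⟨B, hB⟩ := Z_J_lower K J hK hJ q y hy 0 hm0 η hη Z hZI hself.1.2 hqZ hZne
      have hmem : J ⁻¹' (Iio (B : EReal)) ∈ 𝓝[>] (0:ℝ) :=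
        hJp.2 (isOpen_Iio.mem_nhds (EReal.bot_lt_coe B))
      rw [Metric.mem_nhdsWithin_iff] at hmem
      obtain ⟨ε, hε, hsub⟩ := hmem
      have htlb : ∀ t ∈ Z, ε ≤ t := by
        intro t ht
        by_contra hlt
        push_neg at hlt
        rcases eq_or_lt_of_le ((hZI ht).1) with h | h
        · have hb := hB t ht
          rw [← h, hJp.1] at hb
          exact (EReal.coe_ne_bot B) (le_bot_iff.mp hb)
        · have hmem' : t ∈ Metric.ball (0:ℝ) ε ∩ Ioi 0 := by
            constructor
            · rw [Metric.mem_ball, Real.dist_eq, sub_zero, abs_of_pos h]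
              exact hlt
            · exact h
          exact absurd (hB t ht) (not_le.mpr (hsub hmem'))
      refine ⟨min ε (η/2), lt_min hε (by linarith),
        lt_of_le_of_lt (min_le_right _ _) (by linarith),
        fun t ht => le_trans (min_le_left _ _) (htlb t ht), fun x hx hdx => ?_⟩
      have hd : dist x y ≤ η := le_trans hdx (le_trans (min_le_right _ _) (by linarith))
      obtain ⟨⟨hZx, hsepx⟩, -⟩ := hfam x hx hd
      refine ⟨hZx, fun t ht => ⟨?_, fun i =>
        le_trans (le_trans (min_le_right _ _) (by linarith)) (hsepx t ht i)⟩⟩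
      rw [sub_zero, abs_of_nonneg ((hZI ht).1)]
      exact le_trans (min_le_left _ _) (htlb t ht)
  · -- the `(∞₋)` case
    intro hJm q hq0 y hy hmn η hη Z hZn hfam hqZ
    rcases Set.eq_empty_or_nonempty Z with hZe | hZne
    · subst hZe
      exact ⟨η/2, by linarith, by linarith, by simp, fun x hx hdx => by simp⟩
    · have hhi : nodeHi y n = 1 := by unfold nodeHi; simp
      have hlo : 0 ≤ nodeLo y n := by
        unfold nodeLo
        split
        · exact (hy.2 _).1
        · exact le_rfl
      have hZI : Z ⊆ Icc (0:ℝ) 1 := fun t ht =>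
        ⟨le_trans hlo ((hZn ht).1), hhi ▸ ((hZn ht).2)⟩
      have hself := hfam y hy (by simp [hη.le])
      obtain ⟨B, hB⟩ := Z_J_lower K J hK hJ q y hy n hmn η hη Z hZI hself.1.2 hqZ hZne
      have hmem : J ⁻¹' (Iio (B : EReal)) ∈ 𝓝[<] (1:ℝ) :=
        hJm.2 (isOpen_Iio.mem_nhds (EReal.bot_lt_coe B))
      rw [Metric.mem_nhdsWithin_iff] at hmem
      obtain ⟨ε, hε, hsub⟩ := hmem
      have htub : ∀ t ∈ Z, t ≤ 1 - ε := by
        intro t ht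
        by_contra hlt
        push_neg at hlt
        rcases eq_or_lt_of_le ((hZI ht).2) with h | h
        · have hb := hB t ht
          rw [h, hJm.1] at hb
          exact (EReal.coe_ne_bot B) (le_bot_iff.mp hb)
        · have hmem' : t ∈ Metric.ball (1:ℝ) ε ∩ Iio 1 := by
            constructor
            · rw [Metric.mem_ball, Real.dist_eq, abs_of_neg (by linarith : t - 1 < 0)]
              linarith
            · exact h
          exact absurd (hB t ht) (not_le.mpr (hsub hmem'))
      refine ⟨min ε (η/2), lt_min hε (by linarith),
        lt_of_le_of_lt (min_le_right _ _) (by linarith),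
        fun t ht => by
          have := htub t ht
          have := min_le_left ε (η/2)
          linarith, fun x hx hdx => ?_⟩
      have hd : dist x y ≤ η := le_trans hdx (le_trans (min_le_right _ _) (by linarith))
      obtain ⟨⟨hZx, hsepx⟩, -⟩ := hfam x hx hd
      refine ⟨hZx, fun t ht => ⟨?_, fun i =>
        le_trans (le_trans (min_le_right _ _) (by linarith)) (hsepx t ht i)⟩⟩
      rw [abs_of_nonpos (by linarith [(hZI ht).2] : t - 1 ≤ 0)]
      have := htub t ht
      have := min_le_left ε (η/2)
      linarith

end
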